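/- The kernel of Ψ is exactly the S-submodule of ⋀^k_S M spanned by the following elements: (1) ε_I for every k-element set I = {m_1<⋯<m_k} of positive integers whose residues r(m_1),…,r(m_k) modulo n are not pairwise distinct; and (2) sgn(u)·ε_I − sgn(u')·ε_{I'} for every pair of k-element sets I, I' of positive integers each having pairwise distinct residues modulo n, with the same multiset of residues and with Σ_{m∈I} m = Σ_{m∈I'} m, where u (respectively u') is the permutation sorting the sequence of residues of the increasingly-listed elements of I (respectively I') into increasing order. (This computes the kernel of the equivariant rim-hook reduction map.) -/

import Mathlib

open scoped BigOperators

noncomputable section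

open MvPolynomial

/-- `S = ℚ[t_1,…,t_n]` (the variable `X i` is `t_{i+1}`, `0`-based). -/
abbrev S10 (n : ℕ) : Type := MvPolynomial (Fin n) ℚ

/-- `S[q]`. -/
abbrev SQ10 (n : ℕ) : Type := Polynomial (S10 n)

/-- The free `S`-module `M` with basis `(ε_m)_{m ≥ 1}`; `0`-based, the basis vector
`Finsupp.single m 1` is `ε_{m+1}`. -/
abbrev M10 (n : ℕ) : Type := ℕ →₀ S10 n

/-- `N = S[q]^n` with basis `ε_1,…,ε_n` (`0`-based). -/
abbrev N10 (n : ℕ) : Type := Fin n → SQ10 n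

set_option synthInstance.maxHeartbeats 1000000 in
/-- `ε_I = ε_{m_1+1} ∧ ⋯ ∧ ε_{m_k+1}` as an element of the `k`-th exterior power
`⋀[S]^k M`, for a `k`-element set of nonnegative integers encoded by `m : Fin k → ℕ`. -/
noncomputable def epsI (n k : ℕ) (m : Fin k → ℕ) : (⋀[S10 n]^k (M10 n)) :=
  ⟨ExteriorAlgebra.ιMulti (S10 n) k (fun a => Finsupp.single (m a) (1 : S10 n)),
    ExteriorAlgebra.ιMulti_range (S10 n) k (Set.mem_range_self _)⟩

set_option synthInstance.maxHeartbeats 1000000 in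
/-- The generators of the kernel of the rim-hook reduction map `Ψ`:
(1) `ε_I` for `I` whose residues mod `n` are not pairwise distinct; and
(2) `sgn(u)·ε_I − sgn(u')·ε_{I'}` for pairs `I, I'` with pairwise distinct residues,
the same multiset of residues mod `n`, and the same element sum, where `u` (resp. `u'`)
is the permutation sorting the residues of `I` (resp. `I'`) into increasing order. -/
def kerGens (n k : ℕ) : Set (⋀[S10 n]^k (M10 n)) :=
  {x | ∃ m : Fin k → ℕ, StrictMono m ∧
        ¬ Function.Injective (fun a => m a % n) ∧ x = epsI n k m} ∪
  {x | ∃ m m' : Fin k → ℕ, ∃ u u' : Equiv.Perm (Fin k),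
        StrictMono m ∧ StrictMono m' ∧
        Function.Injective (fun a => m a % n) ∧
        Function.Injective (fun a => m' a % n) ∧
        Multiset.map (fun a => m a % n) Finset.univ.val =
          Multiset.map (fun a => m' a % n) Finset.univ.val ∧
        (∑ a, m a) = (∑ a, m' a) ∧
        StrictMono (fun a => m (u a) % n) ∧
        StrictMono (fun a => m' (u' a) % n) ∧
        x = (Equiv.Perm.sign u : ℤ) • epsI n k m -
              (Equiv.Perm.sign u' : ℤ) • epsI n k m'}

namespace RimHook

open ExteriorAlgebra

set_option synthInstance.maxHeartbeats 1000000
set_option maxHeartbeats 1000000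

variable {n k : ℕ}

theorem epsI_def (n k : ℕ) (m : Fin k → ℕ) : epsI n k m =
    ⟨ExteriorAlgebra.ιMulti (S10 n) k (fun a => Finsupp.single (m a) (1 : S10 n)),
      ExteriorAlgebra.ιMulti_range (S10 n) k (Set.mem_range_self _)⟩ := rfl

/-- wedge of standard basis vectors of `N`. -/
noncomputable def wedgeN (n k : ℕ) (f : Fin k → Fin n) : (⋀[SQ10 n]^k (N10 n)) :=
  ⟨ExteriorAlgebra.ιMulti (SQ10 n) k (fun a => Pi.single (f a) (1 : SQ10 n)),
    ExteriorAlgebra.ιMulti_range (SQ10 n) k (Set.mem_range_self _)⟩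

theorem wedgeN_perm (f : Fin k → Fin n) (u : Equiv.Perm (Fin k)) :
    wedgeN n k (f ∘ u) = (Equiv.Perm.sign u : ℤ) • wedgeN n k f := by
  apply Subtype.ext
  exact (ExteriorAlgebra.ιMulti (SQ10 n) k).map_perm (fun a => (Pi.single (f a) (1 : SQ10 n) : N10 n)) u

theorem wedgeN_eq_zero (f : Fin k → Fin n) (hf : ¬ Function.Injective f) :
    wedgeN n k f = 0 := by
  apply Subtype.ext
  simp only [Function.Injective, not_forall] at hf
  obtain ⟨a, b, hab, hne⟩ := hf
  exact (ExteriorAlgebra.ιMulti (SQ10 n) k).map_eq_zero_of_eq (fun a => (Pi.single (f a) (1 : SQ10 n) : N10 n)) (by simp only [hab]) hne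

theorem Psi_epsI (hn : 0 < n)
    (ψ' : M10 n →ₗ[S10 n] N10 n)
    (hψ : ∀ m : ℕ, ψ' (Finsupp.single m (1 : S10 n)) =
      ((-1 : SQ10 n) ^ (k - 1) * Polynomial.X) ^ (m / n) •
        (Pi.single (⟨m % n, Nat.mod_lt m hn⟩ : Fin n) (1 : SQ10 n) : N10 n))
    (Ψ : (⋀[S10 n]^k (M10 n)) →+ (⋀[SQ10 n]^k (N10 n)))
    (hΨ : ∀ v : Fin k → M10 n,
      Ψ ⟨ExteriorAlgebra.ιMulti (S10 n) k v,
          ExteriorAlgebra.ιMulti_range (S10 n) k (Set.mem_range_self _)⟩ =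
        ⟨ExteriorAlgebra.ιMulti (SQ10 n) k (fun a => ψ' (v a)),
          ExteriorAlgebra.ιMulti_range (SQ10 n) k (Set.mem_range_self _)⟩)
    (m : Fin k → ℕ) :
    Ψ (epsI n k m) = (((-1 : SQ10 n) ^ (k - 1) * Polynomial.X) ^ (∑ a, m a / n)) •
      wedgeN n k (fun a => (⟨m a % n, Nat.mod_lt _ hn⟩ : Fin n)) := by
  rw [epsI_def, hΨ]
  apply Subtype.ext
  rw [Submodule.coe_smul]
  show ExteriorAlgebra.ιMulti (SQ10 n) k (fun a => ψ' (Finsupp.single (m a) (1 : S10 n))) = _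
  simp only [hψ]
  have h2 := (ExteriorAlgebra.ιMulti (SQ10 n) k).toMultilinearMap.map_smul_univ
      (fun a => (((-1 : SQ10 n) ^ (k - 1) * Polynomial.X) ^ (m a / n)))
      (fun a => (Pi.single (⟨m a % n, Nat.mod_lt _ hn⟩ : Fin n) (1 : SQ10 n) : N10 n))
  rw [Finset.prod_pow_eq_pow_sum] at h2
  exact h2

theorem strictMono_eq_of_multiset {β : Type*} [LinearOrder β] {f g : Fin k → β}
    (hf : StrictMono f) (hg : StrictMono g)
    (h : Multiset.map f Finset.univ.val = Multiset.map g Finset.univ.val) : f = g := by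
  classical
  have himg : ∀ {f : Fin k → β}, Function.Injective f →
      (Finset.univ.image f).val = Multiset.map f Finset.univ.val := by
    intro f hfi
    rw [Finset.image_val, Multiset.dedup_eq_self.mpr (Finset.univ.nodup.map hfi)]
  have himg_eq : Finset.univ.image f = Finset.univ.image g := by
    apply Finset.val_injective
    rw [himg hf.injective, himg hg.injective, h]
  have hcard : (Finset.univ.image f).card = k := by
    rw [Finset.card_image_of_injective _ hf.injective, Finset.card_univ, Fintype.card_fin]
  have hcard' : (Finset.univ.image g).card = k := by rw [← himg_eq]; exact hcard
  have h1 := Finset.orderEmbOfFin_unique hcard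
      (fun x => Finset.mem_image_of_mem f (Finset.mem_univ x)) hf
  have h2 := Finset.orderEmbOfFin_unique hcard'
      (fun x => Finset.mem_image_of_mem g (Finset.mem_univ x)) hg
  simp only [himg_eq] at h1
  exact h1.trans h2.symm

theorem multiset_map_perm {β : Type*} (f : Fin k → β) (u : Equiv.Perm (Fin k)) :
    Multiset.map (fun a => f (u a)) Finset.univ.val = Multiset.map f Finset.univ.val := by
  have huniv : Multiset.map (⇑u) Finset.univ.val = Finset.univ.val := by
    have h0 := congrArg Finset.val (Finset.map_univ_equiv u)
    rwa [Finset.map_val, Equiv.coe_toEmbedding] at h0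
  calc Multiset.map (fun a => f (u a)) Finset.univ.val
      = Multiset.map f (Multiset.map (⇑u) Finset.univ.val) := by
        rw [Multiset.map_map]; rfl
    _ = Multiset.map f Finset.univ.val := by rw [huniv]

/-- The canonical strictly increasing sequence with residues `J` (sorted) and `d` extra
multiples of `n` all placed on the last entry. -/
def canonF (n k : ℕ) (J : Finset (Fin n)) (hJ : J.card = k) (d : ℕ) : Fin k → ℕ :=
  fun a => (J.orderEmbOfFin hJ a : ℕ) + n * d * (if (a : ℕ) = k - 1 then 1 else 0)

theorem canonF_mod {J : Finset (Fin n)} (hJ : J.card = k) (d : ℕ) (a : Fin k) :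
    canonF n k J hJ d a % n = (J.orderEmbOfFin hJ a : ℕ) := by
  unfold canonF
  rw [mul_assoc, Nat.add_mul_mod_self_left,
    Nat.mod_eq_of_lt (J.orderEmbOfFin hJ a).isLt]

theorem canonF_div (hn : 0 < n) {J : Finset (Fin n)} (hJ : J.card = k) (d : ℕ) (a : Fin k) :
    canonF n k J hJ d a / n = d * (if (a : ℕ) = k - 1 then 1 else 0) := by
  unfold canonF
  rw [mul_assoc, Nat.add_mul_div_left _ _ hn,
    Nat.div_eq_of_lt (J.orderEmbOfFin hJ a).isLt, zero_add]

theorem sum_ite_last (hk : 0 < k) (c : ℕ) :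
    (∑ a : Fin k, c * (if (a : ℕ) = k - 1 then 1 else 0)) = c := by
  have : ∀ a : Fin k, c * (if (a : ℕ) = k - 1 then 1 else 0)
      = if a = (⟨k - 1, by omega⟩ : Fin k) then c else 0 := by
    intro a
    by_cases h : (a : ℕ) = k - 1
    · rw [if_pos h, if_pos (Fin.ext h), mul_one]
    · rw [if_neg h, if_neg (fun hc => h (by rw [hc])), mul_zero]
  simp only [this]
  rw [Finset.sum_ite_eq' Finset.univ (⟨k - 1, by omega⟩ : Fin k) (fun _ => c),
    if_pos (Finset.mem_univ _)]

theorem canonF_div_sum (hn : 0 < n) (hk : 0 < k) {J : Finset (Fin n)} (hJ : J.card = k)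
    (d : ℕ) : (∑ a, canonF n k J hJ d a / n) = d := by
  simp only [canonF_div hn hJ]
  exact sum_ite_last hk d

theorem canonF_sum (hk : 0 < k) {J : Finset (Fin n)} (hJ : J.card = k) (d : ℕ) :
    (∑ a, canonF n k J hJ d a) = (∑ a, (J.orderEmbOfFin hJ a : ℕ)) + n * d := by
  unfold canonF
  rw [Finset.sum_add_distrib, sum_ite_last hk (n * d)]

theorem canonF_strictMono {J : Finset (Fin n)} (hJ : J.card = k) (d : ℕ) :
    StrictMono (canonF n k J hJ d) := by
  intro a b hab
  unfold canonF
  have h1 : (J.orderEmbOfFin hJ a : ℕ) < (J.orderEmbOfFin hJ b : ℕ) :=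
    (J.orderEmbOfFin hJ).strictMono hab
  have h2 : ¬ ((a : ℕ) = k - 1) := by
    have := hab
    have hb := b.isLt
    have : (a : ℕ) < (b : ℕ) := hab
    omega
  rw [if_neg h2, mul_zero, add_zero]
  have : (0:ℕ) ≤ n * d * (if (b : ℕ) = k - 1 then 1 else 0) := Nat.zero_le _
  omega

theorem strictMono_sort {f : Fin k → ℕ} (hf : Function.Injective f) :
    StrictMono (fun a => f (Tuple.sort f a)) := by
  have hmono : Monotone (f ∘ Tuple.sort f) := Tuple.monotone_sort f
  have hinj : Function.Injective (f ∘ Tuple.sort f) := hf.comp (Equiv.injective _)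
  exact hmono.strictMono_of_injective hinj

abbrev PIdx (n k : ℕ) := {J : Finset (Fin n) // J.card = k} × ℕ

noncomputable def canonEps (n k : ℕ) (p : PIdx n k) : ⋀[S10 n]^k (M10 n) :=
  epsI n k (canonF n k p.1.1 p.1.2 p.2)

theorem epsI_strictMono_mem_span (hn : 0 < n) (hk : 0 < k) {m : Fin k → ℕ}
    (hm : StrictMono m) :
    epsI n k m ∈ Submodule.span (S10 n) (kerGens n k ∪ Set.range (canonEps n k)) := by
  by_cases hinj : Function.Injective (fun a => m a % n)
  case neg =>
    have h1 : epsI n k m ∈ {x | ∃ m : Fin k → ℕ, StrictMono m ∧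
        ¬ Function.Injective (fun a => m a % n) ∧ x = epsI n k m} := ⟨m, hm, hinj, rfl⟩
    have h2 : epsI n k m ∈ kerGens n k := Set.mem_union_left _ h1
    exact Submodule.subset_span (Set.mem_union_left _ h2)
  set u := Tuple.sort (fun a => m a % n) with hu_def
  have hu : StrictMono (fun a => m (u a) % n) := strictMono_sort hinj
  set J : Finset (Fin n) :=
    Finset.univ.image (fun a => (⟨m a % n, Nat.mod_lt _ hn⟩ : Fin n)) with hJ_def
  have hinjF : Function.Injective (fun a => (⟨m a % n, Nat.mod_lt _ hn⟩ : Fin n)) := by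
    intro a b hab
    exact hinj (congrArg Fin.val hab)
  have hJ : J.card = k := by
    rw [hJ_def, Finset.card_image_of_injective _ hinjF, Finset.card_univ, Fintype.card_fin]
  have hkey : (fun a => (⟨m (u a) % n, Nat.mod_lt _ hn⟩ : Fin n)) = ⇑(J.orderEmbOfFin hJ) := by
    apply Finset.orderEmbOfFin_unique hJ
    · intro x
      exact Finset.mem_image_of_mem _ (Finset.mem_univ (u x))
    · intro a b hab
      exact Fin.mk_lt_mk.mpr (hu hab)
  have hkey' : ∀ a, m (u a) % n = (J.orderEmbOfFin hJ a : ℕ) := fun a =>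
    congrArg Fin.val (congrFun hkey a)
  set d := ∑ a, m a / n with hd_def
  set c := canonF n k J hJ d with hc_def
  have hcmod : ∀ a, c a % n = (J.orderEmbOfFin hJ a : ℕ) := canonF_mod hJ d
  have hcinj : Function.Injective (fun a => c a % n) := by
    intro a b hab
    simp only [hcmod] at hab
    exact (J.orderEmbOfFin hJ).injective (Fin.val_injective hab)
  have hmult : Multiset.map (fun a => m a % n) Finset.univ.val
      = Multiset.map (fun a => c a % n) Finset.univ.val := by
    rw [← multiset_map_perm (fun a => m a % n) u]
    congr 1
    funext a
    rw [hkey' a, hcmod a]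
  have hsum_res : (∑ a, m a % n) = ∑ a, (J.orderEmbOfFin hJ a : ℕ) := by
    rw [← Equiv.sum_comp u (fun a => m a % n)]
    exact Finset.sum_congr rfl (fun a _ => hkey' a)
  have hsum : (∑ a, m a) = ∑ a, c a := by
    rw [hc_def, canonF_sum hk hJ d]
    have h2 : ∀ a, m a = n * (m a / n) + m a % n := fun a => (Nat.div_add_mod (m a) n).symm
    calc ∑ a, m a = ∑ a, (n * (m a / n) + m a % n) :=
          Finset.sum_congr rfl (fun a _ => h2 a)
      _ = n * d + ∑ a, m a % n := by
          rw [Finset.sum_add_distrib, ← Finset.mul_sum, hd_def]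
      _ = _ := by rw [hsum_res]; ring
  have hcsorted : StrictMono (fun a => c ((1 : Equiv.Perm (Fin k)) a) % n) := by
    simp only [Equiv.Perm.one_apply, hcmod]
    exact fun a b hab => (J.orderEmbOfFin hJ).strictMono hab
  have hgen0 : ((Equiv.Perm.sign u : ℤ) • epsI n k m
      - (Equiv.Perm.sign (1 : Equiv.Perm (Fin k)) : ℤ) • epsI n k c) ∈
      {x | ∃ m m' : Fin k → ℕ, ∃ u u' : Equiv.Perm (Fin k),
        StrictMono m ∧ StrictMono m' ∧
        Function.Injective (fun a => m a % n) ∧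
        Function.Injective (fun a => m' a % n) ∧
        Multiset.map (fun a => m a % n) Finset.univ.val =
          Multiset.map (fun a => m' a % n) Finset.univ.val ∧
        (∑ a, m a) = (∑ a, m' a) ∧
        StrictMono (fun a => m (u a) % n) ∧
        StrictMono (fun a => m' (u' a) % n) ∧
        x = (Equiv.Perm.sign u : ℤ) • epsI n k m -
              (Equiv.Perm.sign u' : ℤ) • epsI n k m'} :=
    ⟨m, c, u, 1, hm, canonF_strictMono hJ d, hinj, hcinj, hmult, hsum, hu, hcsorted, rfl⟩
  have hgen : ((Equiv.Perm.sign u : ℤ) • epsI n k m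
      - (Equiv.Perm.sign (1 : Equiv.Perm (Fin k)) : ℤ) • epsI n k c) ∈ kerGens n k :=
    Set.mem_union_right _ hgen0
  have hsq : (Equiv.Perm.sign u : ℤ) • ((Equiv.Perm.sign u : ℤ) • epsI n k m) = epsI n k m := by
    rw [smul_smul, ← Units.val_mul, Int.units_mul_self, Units.val_one, one_smul]
  have hrepr : epsI n k m = (Equiv.Perm.sign u : ℤ) • ((Equiv.Perm.sign u : ℤ) • epsI n k m
      - (Equiv.Perm.sign (1 : Equiv.Perm (Fin k)) : ℤ) • epsI n k c)
      + (Equiv.Perm.sign u : ℤ) • epsI n k c := by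
    have h1 : (Equiv.Perm.sign (1 : Equiv.Perm (Fin k)) : ℤ) = 1 := by
      rw [Equiv.Perm.sign_one]; rfl
    rw [h1, one_smul, smul_sub, hsq]
    abel
  rw [hrepr]
  refine Submodule.add_mem _
    (zsmul_mem (Submodule.subset_span (Set.mem_union_left _ hgen)) _)
    (zsmul_mem (Submodule.subset_span (Set.mem_union_right _
      (Set.mem_range_self ((⟨J, hJ⟩, d) : PIdx n k)))) _)

theorem epsI_any_mem_span (hn : 0 < n) (hk : 0 < k) (r : Fin k → ℕ) :
    epsI n k r ∈ Submodule.span (S10 n) (kerGens n k ∪ Set.range (canonEps n k)) := by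
  by_cases hinj : Function.Injective r
  · set σ := Tuple.sort r with hσ_def
    have hmono : StrictMono (fun a => r (σ a)) := strictMono_sort hinj
    have hperm : epsI n k (fun a => r (σ a)) = (Equiv.Perm.sign σ : ℤ) • epsI n k r := by
      apply Subtype.ext
      exact (ExteriorAlgebra.ιMulti (S10 n) k).map_perm
        (fun a => (Finsupp.single (r a) (1 : S10 n) : M10 n)) σ
    have hsq : (Equiv.Perm.sign σ : ℤ) • ((Equiv.Perm.sign σ : ℤ) • epsI n k r)
        = epsI n k r := by
      rw [smul_smul, ← Units.val_mul, Int.units_mul_self, Units.val_one, one_smul]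
    rw [← hsq, ← hperm]
    exact zsmul_mem (epsI_strictMono_mem_span hn hk hmono) _
  · have h0 : epsI n k r = 0 := by
      apply Subtype.ext
      simp only [Function.Injective, not_forall] at hinj
      obtain ⟨a, b, hab, hne⟩ := hinj
      exact (ExteriorAlgebra.ιMulti (S10 n) k).map_eq_zero_of_eq
        (fun a => (Finsupp.single (r a) (1 : S10 n) : M10 n))
        (by simp only [hab]) hne
    rw [h0]
    exact Submodule.zero_mem _

theorem mem_span_union (hn : 0 < n) (hk : 0 < k) (x : ⋀[S10 n]^k (M10 n)) :
    x ∈ Submodule.span (S10 n) (kerGens n k ∪ Set.range (canonEps n k)) := by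
  classical
  set T := Submodule.span (S10 n) (kerGens n k ∪ Set.range (canonEps n k)) with hT
  have hmap : (x : ExteriorAlgebra (S10 n) (M10 n))
      ∈ T.map (Submodule.subtype _) := by
    have hx : (x : ExteriorAlgebra (S10 n) (M10 n))
        ∈ Submodule.span (S10 n) (Set.range (ExteriorAlgebra.ιMulti (S10 n) k)) :=
      (le_of_eq (ExteriorAlgebra.ιMulti_span_fixedDegree (S10 n) k).symm) x.2
    refine Submodule.span_le.mpr ?_ hx
    rintro _ ⟨v, rfl⟩
    have hv : v = fun a => ∑ j ∈ (v a).support, Finsupp.single j ((v a) j) := by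
      funext a
      exact (Finsupp.sum_single (v a)).symm
    have hexp := (ExteriorAlgebra.ιMulti (S10 n) k).toMultilinearMap.map_sum_finset
      (fun a j => (Finsupp.single j ((v a) j) : M10 n)) (fun a => (v a).support)
    have hv2 : ExteriorAlgebra.ιMulti (S10 n) k v
        = ∑ rr ∈ Fintype.piFinset (fun a => (v a).support),
            ExteriorAlgebra.ιMulti (S10 n) k
              (fun a => (Finsupp.single (rr a) ((v a) (rr a)) : M10 n)) := by
      conv_lhs => rw [hv]
      exact hexp
    rw [hv2]
    refine Submodule.sum_mem _ (fun rr _ => ?_)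
    have hsingle : (fun a => (Finsupp.single (rr a) ((v a) (rr a)) : M10 n))
        = fun a => ((v a) (rr a)) • (Finsupp.single (rr a) (1 : S10 n) : M10 n) := by
      funext a
      rw [Finsupp.smul_single', mul_one]
    rw [hsingle]
    have hsm : ExteriorAlgebra.ιMulti (S10 n) k
          (fun a => ((v a) (rr a)) • (Finsupp.single (rr a) (1 : S10 n) : M10 n))
        = (∏ a, (v a) (rr a)) • ExteriorAlgebra.ιMulti (S10 n) k
            (fun a => (Finsupp.single (rr a) (1 : S10 n) : M10 n)) :=
      (ExteriorAlgebra.ιMulti (S10 n) k).toMultilinearMap.map_smul_univ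
        (fun a => (v a) (rr a)) (fun a => (Finsupp.single (rr a) (1 : S10 n) : M10 n))
    rw [hsm]
    refine Submodule.smul_mem _ _ ?_
    have := epsI_any_mem_span hn hk rr
    exact Submodule.mem_map_of_mem (f := Submodule.subtype _) this
  obtain ⟨y, hy, hyx⟩ := hmap
  have : y = x := Subtype.coe_injective hyx
  rwa [this] at hy

/-- The determinant alternating map picking out the coordinates in `J`. -/
noncomputable def detA (n k : ℕ) (J : Finset (Fin n)) (hJ : J.card = k) :
    (N10 n) [⋀^Fin k]→ₗ[SQ10 n] SQ10 n :=
  (Matrix.detRowAlternating : (Fin k → SQ10 n) [⋀^Fin k]→ₗ[SQ10 n] SQ10 n).compLinearMap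
    (LinearMap.funLeft (SQ10 n) (SQ10 n) (J.orderEmbOfFin hJ))

noncomputable def phiJ (n k : ℕ) (J : Finset (Fin n)) (hJ : J.card = k) :
    ExteriorAlgebra (SQ10 n) (N10 n) →ₗ[SQ10 n] SQ10 n :=
  ExteriorAlgebra.liftAlternating
    (Function.update (fun i => (0 : (N10 n) [⋀^Fin i]→ₗ[SQ10 n] SQ10 n)) k (detA n k J hJ))

theorem phiJ_wedge (J J' : Finset (Fin n)) (hJ : J.card = k) (hJ' : J'.card = k) :
    phiJ n k J hJ ((wedgeN n k (J'.orderEmbOfFin hJ')).val)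
      = if J' = J then 1 else 0 := by
  classical
  have h1 : (wedgeN n k (J'.orderEmbOfFin hJ')).val
      = ExteriorAlgebra.ιMulti (SQ10 n) k
          (fun a => (Pi.single (J'.orderEmbOfFin hJ' a) (1 : SQ10 n) : N10 n)) := rfl
  rw [h1]
  unfold phiJ
  rw [ExteriorAlgebra.liftAlternating_apply_ιMulti, Function.update_self]
  unfold detA
  rw [AlternatingMap.compLinearMap_apply]
  by_cases hJJ : J' = J
  · subst hJJ
    rw [if_pos rfl]
    have hM : (fun i => LinearMap.funLeft (SQ10 n) (SQ10 n) (J'.orderEmbOfFin hJ)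
        ((fun a => (Pi.single (J'.orderEmbOfFin hJ' a) (1 : SQ10 n) : N10 n)) i))
        = (1 : Matrix (Fin k) (Fin k) (SQ10 n)) := by
      ext i j
      rw [Matrix.one_apply]
      simp only [LinearMap.funLeft_apply]
      rw [Pi.single_apply]
      by_cases hij : i = j
      · subst hij
        rw [if_pos rfl, if_pos rfl]
      · have hne : J'.orderEmbOfFin hJ j ≠ J'.orderEmbOfFin hJ' i := by
          intro hc
          exact hij ((J'.orderEmbOfFin hJ').injective hc.symm)
        rw [if_neg hne, if_neg hij]
    rw [hM]
    exact Matrix.det_one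
  · rw [if_neg hJJ]
    have hrow : ∃ i, (J'.orderEmbOfFin hJ') i ∉ J := by
      by_contra hc
      push_neg at hc
      have hsub : J' ⊆ J := by
        intro x hx
        have : x ∈ Set.range (J'.orderEmbOfFin hJ') := by
          rw [Finset.range_orderEmbOfFin]
          exact hx
        obtain ⟨i, rfl⟩ := this
        exact hc i
      exact hJJ (Finset.eq_of_subset_of_card_le hsub (by rw [hJ, hJ']))
    obtain ⟨i, hi⟩ := hrow
    exact Matrix.det_eq_zero_of_row_eq_zero i (fun j => Pi.single_eq_of_ne
      (fun hc => hi (by rw [← hc]; exact Finset.orderEmbOfFin_mem J hJ j)) 1)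

theorem Psi_canonEps (hn : 0 < n) (hk : 0 < k)
    (ψ' : M10 n →ₗ[S10 n] N10 n)
    (hψ : ∀ m : ℕ, ψ' (Finsupp.single m (1 : S10 n)) =
      ((-1 : SQ10 n) ^ (k - 1) * Polynomial.X) ^ (m / n) •
        (Pi.single (⟨m % n, Nat.mod_lt m hn⟩ : Fin n) (1 : SQ10 n) : N10 n))
    (Ψ : (⋀[S10 n]^k (M10 n)) →+ (⋀[SQ10 n]^k (N10 n)))
    (hΨ : ∀ v : Fin k → M10 n,
      Ψ ⟨ExteriorAlgebra.ιMulti (S10 n) k v,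
          ExteriorAlgebra.ιMulti_range (S10 n) k (Set.mem_range_self _)⟩ =
        ⟨ExteriorAlgebra.ιMulti (SQ10 n) k (fun a => ψ' (v a)),
          ExteriorAlgebra.ιMulti_range (SQ10 n) k (Set.mem_range_self _)⟩)
    (p : PIdx n k) :
    Ψ (canonEps n k p) = (((-1 : SQ10 n) ^ (k - 1) * Polynomial.X) ^ p.2) •
      wedgeN n k ⇑(p.1.1.orderEmbOfFin p.1.2) := by
  unfold canonEps
  rw [Psi_epsI hn ψ' hψ Ψ hΨ, canonF_div_sum hn hk]
  have harg : (fun a => (⟨canonF n k p.1.1 p.1.2 p.2 a % n, Nat.mod_lt _ hn⟩ : Fin n))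
      = ⇑(p.1.1.orderEmbOfFin p.1.2) := by
    funext a
    exact Fin.ext (canonF_mod p.1.2 p.2 a)
  rw [harg]

theorem hcc_pow (d : ℕ) : ((-1 : SQ10 n) ^ (k - 1) * Polynomial.X) ^ d
    = Polynomial.C ((-1 : S10 n) ^ ((k - 1) * d)) * Polynomial.X ^ d := by
  rw [mul_pow, ← pow_mul, map_pow, map_neg, map_one]

theorem indep (hn : 0 < n) (hk : 0 < k)
    (ψ' : M10 n →ₗ[S10 n] N10 n)
    (hψ : ∀ m : ℕ, ψ' (Finsupp.single m (1 : S10 n)) =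
      ((-1 : SQ10 n) ^ (k - 1) * Polynomial.X) ^ (m / n) •
        (Pi.single (⟨m % n, Nat.mod_lt m hn⟩ : Fin n) (1 : SQ10 n) : N10 n))
    (Ψ : (⋀[S10 n]^k (M10 n)) →+ (⋀[SQ10 n]^k (N10 n)))
    (hΨlin : ∀ (c : S10 n) (x : ⋀[S10 n]^k (M10 n)),
      Ψ (c • x) = Polynomial.C c • Ψ x)
    (hΨ : ∀ v : Fin k → M10 n,
      Ψ ⟨ExteriorAlgebra.ιMulti (S10 n) k v,
          ExteriorAlgebra.ιMulti_range (S10 n) k (Set.mem_range_self _)⟩ =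
        ⟨ExteriorAlgebra.ιMulti (SQ10 n) k (fun a => ψ' (v a)),
          ExteriorAlgebra.ιMulti_range (SQ10 n) k (Set.mem_range_self _)⟩)
    (c : PIdx n k →₀ S10 n)
    (hc : Ψ (c.sum fun p s => s • canonEps n k p) = 0) : c = 0 := by
  classical
  have key : ∀ p₀ : PIdx n k, p₀ ∈ c.support → c p₀ = 0 := by
    intro p₀ hp₀
    set L : (⋀[SQ10 n]^k (N10 n)) →ₗ[SQ10 n] SQ10 n :=
      (phiJ n k p₀.1.1 p₀.1.2).comp (Submodule.subtype _) with hL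
    have hLwedge : ∀ (J' : Finset (Fin n)) (hJ' : J'.card = k),
        L (wedgeN n k ⇑(J'.orderEmbOfFin hJ')) = if J' = p₀.1.1 then 1 else 0 := by
      intro J' hJ'
      rw [hL, LinearMap.comp_apply, Submodule.subtype_apply]
      exact phiJ_wedge p₀.1.1 J' p₀.1.2 hJ'
    have h1 : Ψ (c.sum fun p s => s • canonEps n k p)
        = c.sum fun p s =>
            (Polynomial.C s * ((-1 : SQ10 n) ^ (k - 1) * Polynomial.X) ^ p.2) •
              wedgeN n k ⇑(p.1.1.orderEmbOfFin p.1.2) := by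
      rw [map_finsuppSum]
      refine Finsupp.sum_congr (fun p _ => ?_)
      rw [hΨlin, Psi_canonEps hn hk ψ' hψ Ψ hΨ, smul_smul]
    have h2 : (c.sum fun p s => L
        ((Polynomial.C s * ((-1 : SQ10 n) ^ (k - 1) * Polynomial.X) ^ p.2) •
          wedgeN n k ⇑(p.1.1.orderEmbOfFin p.1.2))) = 0 := by
      rw [← map_finsuppSum, ← h1, hc, map_zero]
    have h4 : ∀ p ∈ c.support,
        Polynomial.coeff (L ((Polynomial.C (c p) *
            ((-1 : SQ10 n) ^ (k - 1) * Polynomial.X) ^ p.2) •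
          wedgeN n k ⇑(p.1.1.orderEmbOfFin p.1.2))) p₀.2
        = if p = p₀ then (-1 : S10 n) ^ ((k - 1) * p₀.2) * c p₀ else 0 := by
      intro p _
      rw [map_smul, smul_eq_mul, hLwedge p.1.1 p.1.2, hcc_pow]
      by_cases hJeq : p.1.1 = p₀.1.1
      · rw [if_pos hJeq, mul_one, ← mul_assoc, ← Polynomial.C_mul,
          Polynomial.coeff_C_mul, Polynomial.coeff_X_pow]
        by_cases hd : p.2 = p₀.2
        · have hpp : p = p₀ := Prod.ext (Subtype.ext hJeq) hd
          subst hpp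
          rw [if_pos rfl, if_pos rfl, mul_one, mul_comm]
        · rw [if_neg (fun h => hd h.symm), if_neg (fun h => hd (by rw [h])), mul_zero]
      · rw [if_neg hJeq, mul_zero, Polynomial.coeff_zero,
          if_neg (fun hc => hJeq (by rw [hc]))]
    have h5 := congrArg (fun q => Polynomial.coeff q p₀.2) h2
    simp only [Polynomial.coeff_zero] at h5
    rw [Finsupp.sum, Polynomial.finset_sum_coeff, Finset.sum_congr rfl h4,
      Finset.sum_ite_eq' c.support p₀, if_pos hp₀] at h5
    have hne : ((-1 : S10 n) ^ ((k - 1) * p₀.2)) ≠ 0 :=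
      pow_ne_zero _ (neg_ne_zero.mpr one_ne_zero)
    rcases mul_eq_zero.mp h5 with h | h
    · exact absurd h hne
    · exact h
  refine Finsupp.ext fun p₀ => ?_
  simp only [Finsupp.coe_zero, Pi.zero_apply]
  by_cases hp : p₀ ∈ c.support
  · exact key p₀ hp
  · exact Finsupp.notMem_support_iff.mp hp

theorem Psi_gen_zero (hn : 0 < n) (hk : 0 < k)
    (ψ' : M10 n →ₗ[S10 n] N10 n)
    (hψ : ∀ m : ℕ, ψ' (Finsupp.single m (1 : S10 n)) =
      ((-1 : SQ10 n) ^ (k - 1) * Polynomial.X) ^ (m / n) •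
        (Pi.single (⟨m % n, Nat.mod_lt m hn⟩ : Fin n) (1 : SQ10 n) : N10 n))
    (Ψ : (⋀[S10 n]^k (M10 n)) →+ (⋀[SQ10 n]^k (N10 n)))
    (hΨ : ∀ v : Fin k → M10 n,
      Ψ ⟨ExteriorAlgebra.ιMulti (S10 n) k v,
          ExteriorAlgebra.ιMulti_range (S10 n) k (Set.mem_range_self _)⟩ =
        ⟨ExteriorAlgebra.ιMulti (SQ10 n) k (fun a => ψ' (v a)),
          ExteriorAlgebra.ιMulti_range (SQ10 n) k (Set.mem_range_self _)⟩)
    {g : ⋀[S10 n]^k (M10 n)} (hg : g ∈ kerGens n k) : Ψ g = 0 := by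
  rcases hg with ⟨m, hm, hinj, rfl⟩ |
    ⟨m, m', u, u', hm, hm', hinj, hinj', hmult, hsum, hu, hu', rfl⟩
  · rw [Psi_epsI hn ψ' hψ Ψ hΨ]
    have hni : ¬ Function.Injective (fun a => (⟨m a % n, Nat.mod_lt _ hn⟩ : Fin n)) := by
      intro hcon
      exact hinj fun a b hab => hcon (Fin.ext hab)
    rw [wedgeN_eq_zero _ hni, smul_zero]
  · -- residues and exponents agree
    have e1 : Multiset.map (fun a => m (u a) % n) Finset.univ.val
        = Multiset.map (fun a => m a % n) Finset.univ.val :=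
      multiset_map_perm (fun a => m a % n) u
    have e2 : Multiset.map (fun a => m' (u' a) % n) Finset.univ.val
        = Multiset.map (fun a => m' a % n) Finset.univ.val :=
      multiset_map_perm (fun a => m' a % n) u'
    have hmm : (fun a => m (u a) % n) = (fun a => m' (u' a) % n) :=
      strictMono_eq_of_multiset hu hu' (e1.trans (hmult.trans e2.symm))
    have hres : (∑ a, m a % n) = ∑ a, m' a % n := by
      have h0 := congrArg Multiset.sum hmult
      rwa [← Finset.sum_eq_multiset_sum, ← Finset.sum_eq_multiset_sum] at h0
    have hdiv : (∑ a, m a / n) = ∑ a, m' a / n := by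
      have h1 : n * (∑ a, m a / n) + (∑ a, m a % n) = ∑ a, m a := by
        rw [Finset.mul_sum, ← Finset.sum_add_distrib]
        exact Finset.sum_congr rfl fun a _ => Nat.div_add_mod (m a) n
      have h2 : n * (∑ a, m' a / n) + (∑ a, m' a % n) = ∑ a, m' a := by
        rw [Finset.mul_sum, ← Finset.sum_add_distrib]
        exact Finset.sum_congr rfl fun a _ => Nat.div_add_mod (m' a) n
      have h3 := h1.trans (hsum.trans h2.symm)
      rw [hres] at h3
      exact Nat.eq_of_mul_eq_mul_left hn (Nat.add_right_cancel h3)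
    have hcomp : ((fun a => (⟨m a % n, Nat.mod_lt _ hn⟩ : Fin n)) ∘ u)
        = ((fun a => (⟨m' a % n, Nat.mod_lt _ hn⟩ : Fin n)) ∘ u') := by
      funext a
      exact Fin.ext (congrFun hmm a)
    have hz : ∀ (σ : Equiv.Perm (Fin k)) (D : ℕ) (f : Fin k → Fin n),
        (Equiv.Perm.sign σ : ℤ) • ((((-1 : SQ10 n) ^ (k - 1) * Polynomial.X) ^ D) • wedgeN n k f)
        = (((-1 : SQ10 n) ^ (k - 1) * Polynomial.X) ^ D) • wedgeN n k (f ∘ σ) := by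
      intro σ D f
      rw [wedgeN_perm f σ, smul_comm]
    rw [map_sub, AddMonoidHom.map_zsmul, AddMonoidHom.map_zsmul,
      Psi_epsI hn ψ' hψ Ψ hΨ m, Psi_epsI hn ψ' hψ Ψ hΨ m', hdiv, hz, hz, hcomp, sub_self]

theorem span_ker_zero (hn : 0 < n) (hk : 0 < k)
    (ψ' : M10 n →ₗ[S10 n] N10 n)
    (hψ : ∀ m : ℕ, ψ' (Finsupp.single m (1 : S10 n)) =
      ((-1 : SQ10 n) ^ (k - 1) * Polynomial.X) ^ (m / n) •
        (Pi.single (⟨m % n, Nat.mod_lt m hn⟩ : Fin n) (1 : SQ10 n) : N10 n))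
    (Ψ : (⋀[S10 n]^k (M10 n)) →+ (⋀[SQ10 n]^k (N10 n)))
    (hΨlin : ∀ (c : S10 n) (x : ⋀[S10 n]^k (M10 n)),
      Ψ (c • x) = Polynomial.C c • Ψ x)
    (hΨ : ∀ v : Fin k → M10 n,
      Ψ ⟨ExteriorAlgebra.ιMulti (S10 n) k v,
          ExteriorAlgebra.ιMulti_range (S10 n) k (Set.mem_range_self _)⟩ =
        ⟨ExteriorAlgebra.ιMulti (SQ10 n) k (fun a => ψ' (v a)),
          ExteriorAlgebra.ιMulti_range (SQ10 n) k (Set.mem_range_self _)⟩)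
    {y : ⋀[S10 n]^k (M10 n)} (hy : y ∈ Submodule.span (S10 n) (kerGens n k)) :
    Ψ y = 0 := by
  refine Submodule.span_induction (fun g hg => Psi_gen_zero hn hk ψ' hψ Ψ hΨ hg)
    (map_zero Ψ) (fun a b _ _ ha hb => by rw [map_add, ha, hb, add_zero])
    (fun s a _ ha => by rw [hΨlin, ha, smul_zero]) hy

end RimHook

set_option synthInstance.maxHeartbeats 1000000 in
set_option maxHeartbeats 1000000 in
/-- **kernel of the equivariant rim-hook reduction map.**
Fix `n, k ≥ 1`.  Let `ψ' : M → N` be the `S`-linear map with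
`ψ'(ε_{sn+i}) = ((−1)^{k−1} q)^s ε_i` for `s ≥ 0`, `1 ≤ i ≤ n`, and let
`Ψ : ⋀^k_S M → ⋀^k_{S[q]} N` be the induced `S`-linear map on `k`-th exterior powers
(additive, compatible with scalars via `S → S[q]`, and sending
`v_1∧⋯∧v_k ↦ ψ'(v_1)∧⋯∧ψ'(v_k)`).  Then the kernel of `Ψ` is exactly the `S`-submodule
of `⋀^k_S M` spanned by the elements of `kerGens`. -/
theorem kernel_of_rim_hook_reduction (n k : ℕ) (hn : 0 < n) (hk : 0 < k)
    (ψ' : M10 n →ₗ[S10 n] N10 n)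
    (hψ : ∀ m : ℕ, ψ' (Finsupp.single m (1 : S10 n)) =
      ((-1 : SQ10 n) ^ (k - 1) * Polynomial.X) ^ (m / n) •
        (Pi.single (⟨m % n, Nat.mod_lt m hn⟩ : Fin n) (1 : SQ10 n) : N10 n))
    (Ψ : (⋀[S10 n]^k (M10 n)) →+ (⋀[SQ10 n]^k (N10 n)))
    (hΨlin : ∀ (c : S10 n) (x : ⋀[S10 n]^k (M10 n)),
      Ψ (c • x) = Polynomial.C c • Ψ x)
    (hΨ : ∀ v : Fin k → M10 n,
      Ψ ⟨ExteriorAlgebra.ιMulti (S10 n) k v,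
          ExteriorAlgebra.ιMulti_range (S10 n) k (Set.mem_range_self _)⟩ =
        ⟨ExteriorAlgebra.ιMulti (SQ10 n) k (fun a => ψ' (v a)),
          ExteriorAlgebra.ιMulti_range (SQ10 n) k (Set.mem_range_self _)⟩) :
    ∀ x : ⋀[S10 n]^k (M10 n),
      Ψ x = 0 ↔ x ∈ Submodule.span (S10 n) (kerGens n k) := by
  intro x
  constructor
  · intro hx0
    have hsplit : x ∈ Submodule.span (S10 n) (kerGens n k)
        ⊔ Submodule.span (S10 n) (Set.range (RimHook.canonEps n k)) := by
      rw [← Submodule.span_union]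
      exact RimHook.mem_span_union hn hk x
    obtain ⟨b, hb, a, ha, hba⟩ := Submodule.mem_sup.mp hsplit
    obtain ⟨c, hcsum⟩ := Finsupp.mem_span_range_iff_exists_finsupp.mp ha
    have hPsib : Ψ b = 0 := RimHook.span_ker_zero hn hk ψ' hψ Ψ hΨlin hΨ hb
    have hPsia : Ψ a = 0 := by
      have h0 : Ψ x = Ψ b + Ψ a := by rw [← map_add, hba]
      rw [hx0, hPsib, zero_add] at h0
      exact h0.symm
    have hc0 : c = 0 := RimHook.indep hn hk ψ' hψ Ψ hΨlin hΨ c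
      (by rw [hcsum]; exact hPsia)
    have ha0 : a = 0 := by rw [← hcsum, hc0, Finsupp.sum_zero_index]
    rw [← hba, ha0, add_zero]
    exact hb
  · intro hxs
    exact RimHook.span_ker_zero hn hk ψ' hψ Ψ hΨlin hΨ hxs

end
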